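/- Let q = 2^m, and let a₃, a₄, a₅ ∈ 𝔽_q with a₃ ≠ 0, a₄ ≠ 0, and b₁, b₃, b₄, b₅ ∈ 𝔽_q. Set A₁ = b₁a₃²/a₄², C₁ = b₃ + b₁a₅²/a₄² + b₄a₃/a₄, D₁ = b₄a₅/a₄ + b₅. Then the map F(x,y) = (a₃y² + a₄x + a₅y, b₁x² + b₃y² + b₄x + b₅y) is a bijection of 𝔽_q² if and only if the linearized polynomial L₁(y) = A₁y⁴ + C₁y² + D₁y has only the root y = 0 in 𝔽_q. -/

import Mathlib

/-- For q = 2^m, a₃ ≠ 0, a₄ ≠ 0, the map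
F(x,y) = (a₃y² + a₄x + a₅y, b₁x² + b₃y² + b₄x + b₅y) is a bijection of 𝔽_q² iff the
linearized polynomial L₁(y) = A₁y⁴ + C₁y² + D₁y has only the root 0 in 𝔽_q, where
A₁ = b₁a₃²/a₄², C₁ = b₃ + b₁a₅²/a₄² + b₄a₃/a₄, D₁ = b₄a₅/a₄ + b₅. -/
theorem stmt_5 {F : Type*} [Field F] [Fintype F] (m : ℕ) (hm : 0 < m)
    (hcard : Fintype.card F = 2 ^ m)
    (a₃ a₄ a₅ b₁ b₃ b₄ b₅ : F) (ha₃ : a₃ ≠ 0) (ha₄ : a₄ ≠ 0) :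
    Function.Bijective (fun p : F × F =>
      (a₃ * p.2 ^ 2 + a₄ * p.1 + a₅ * p.2,
       b₁ * p.1 ^ 2 + b₃ * p.2 ^ 2 + b₄ * p.1 + b₅ * p.2)) ↔
      (∀ y : F,
        (b₁ * a₃ ^ 2 / a₄ ^ 2) * y ^ 4
          + (b₃ + b₁ * a₅ ^ 2 / a₄ ^ 2 + b₄ * a₃ / a₄) * y ^ 2
          + (b₄ * a₅ / a₄ + b₅) * y = 0 → y = 0) := by
  haveI : CharP F 2 := by
    obtain ⟨p, hp⟩ := CharP.exists F
    haveI := hp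
    haveI hfact : Fact p.Prime := ⟨CharP.char_is_prime F p⟩
    obtain ⟨n, -, hn⟩ := FiniteField.card F p
    have hpd : p ∣ 2 ^ m := by
      rw [← hcard, hn]; exact dvd_pow_self p n.2.ne'
    have : p = 2 := by
      have := (Nat.Prime.dvd_of_dvd_pow (p := p) hfact.out hpd)
      exact (Nat.prime_dvd_prime_iff_eq hfact.out Nat.prime_two).mp this
    rwa [this] at hp
  have h2 : (2 : F) = 0 := CharTwo.two_eq_zero
  have ha₄2 : a₄ ^ 2 ≠ 0 := pow_ne_zero 2 ha₄
  -- numerator version of L₁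
  have hNL : ∀ y : F,
      a₄ ^ 2 * ((b₁ * a₃ ^ 2 / a₄ ^ 2) * y ^ 4
          + (b₃ + b₁ * a₅ ^ 2 / a₄ ^ 2 + b₄ * a₃ / a₄) * y ^ 2
          + (b₄ * a₅ / a₄ + b₅) * y)
        = b₁ * a₃ ^ 2 * y ^ 4 + (b₃ * a₄ ^ 2 + b₁ * a₅ ^ 2 + b₄ * a₃ * a₄) * y ^ 2
          + (b₄ * a₅ * a₄ + b₅ * a₄ ^ 2) * y := by
    intro y
    field_simp
  -- core identity (division-free)
  have key : ∀ u v : F, a₄ * u + a₃ * v ^ 2 + a₅ * v = 0 →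
      a₄ ^ 2 * (b₁ * u ^ 2 + b₃ * v ^ 2 + b₄ * u + b₅ * v) =
      b₁ * a₃ ^ 2 * v ^ 4 + (b₃ * a₄ ^ 2 + b₁ * a₅ ^ 2 + b₄ * a₃ * a₄) * v ^ 2
        + (b₄ * a₅ * a₄ + b₅ * a₄ ^ 2) * v := by
    intro u v h
    linear_combination (b₁ * (a₄ * u - a₃ * v ^ 2 - a₅ * v) + b₄ * a₄) * h
      + (b₁ * a₃ * a₅ * v ^ 3 - b₄ * a₄ * (a₃ * v ^ 2 + a₅ * v)) * h2
  constructor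
  · rintro ⟨hinj, -⟩ y hy
    have hN : b₁ * a₃ ^ 2 * y ^ 4 + (b₃ * a₄ ^ 2 + b₁ * a₅ ^ 2 + b₄ * a₃ * a₄) * y ^ 2
        + (b₄ * a₅ * a₄ + b₅ * a₄ ^ 2) * y = 0 := by
      rw [← hNL y, hy, mul_zero]
    have hcancel : a₄ * ((a₃ * y ^ 2 + a₅ * y) / a₄) = a₃ * y ^ 2 + a₅ * y :=
      mul_div_cancel₀ _ ha₄
    have heq : a₄ * ((a₃ * y ^ 2 + a₅ * y) / a₄) + a₃ * y ^ 2 + a₅ * y = 0 := by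
      rw [hcancel]; linear_combination (a₃ * y ^ 2 + a₅ * y) * h2
    have h := hinj (a₁ := ((a₃ * y ^ 2 + a₅ * y) / a₄, y)) (a₂ := (0, 0)) ?_
    · exact congrArg Prod.snd h
    · show (a₃ * y ^ 2 + a₄ * ((a₃ * y ^ 2 + a₅ * y) / a₄) + a₅ * y, _) = _
      have hsnd : b₁ * ((a₃ * y ^ 2 + a₅ * y) / a₄) ^ 2 + b₃ * y ^ 2
          + b₄ * ((a₃ * y ^ 2 + a₅ * y) / a₄) + b₅ * y = 0 := by
        apply mul_left_cancel₀ ha₄2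
        rw [key _ _ heq, hN, mul_zero]
      simp only [Prod.mk.injEq]
      refine ⟨?_, by rw [hsnd]; ring⟩
      rw [hcancel]
      linear_combination (a₃ * y ^ 2 + a₅ * y) * h2
  · intro hL
    refine Finite.injective_iff_bijective.mp ?_
    rintro ⟨x, y⟩ ⟨x', y'⟩ heq
    simp only [Prod.mk.injEq] at heq
    obtain ⟨h1, h2'⟩ := heq
    have hv : a₄ * (x + x') + a₃ * (y + y') ^ 2 + a₅ * (y + y') = 0 := by
      linear_combination h1 + (a₃ * y * y' + a₄ * x' + a₅ * y' + a₃ * y' ^ 2) * h2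
    have hz : b₁ * (x + x') ^ 2 + b₃ * (y + y') ^ 2 + b₄ * (x + x') + b₅ * (y + y') = 0 := by
      linear_combination h2' + (b₁ * x * x' + b₃ * y * y' + b₁ * x' ^ 2 + b₃ * y' ^ 2
        + b₄ * x' + b₅ * y') * h2
    have hN : b₁ * a₃ ^ 2 * (y + y') ^ 4 + (b₃ * a₄ ^ 2 + b₁ * a₅ ^ 2 + b₄ * a₃ * a₄) * (y + y') ^ 2
        + (b₄ * a₅ * a₄ + b₅ * a₄ ^ 2) * (y + y') = 0 := by
      rw [← key _ _ hv, hz, mul_zero]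
    have hy0 : y + y' = 0 := by
      refine hL _ ?_
      apply mul_left_cancel₀ ha₄2
      rw [hNL, hN, mul_zero]
    have hyy : y = y' := by linear_combination hy0 - y' * h2
    have hxx : x = x' := by
      have hu : a₄ * (x + x') = 0 := by
        rw [hyy] at hv
        linear_combination hv + (-2 * a₃ * y' ^ 2 - a₅ * y') * h2
      rcases mul_eq_zero.mp hu with h | h
      · exact absurd h ha₄
      · linear_combination h - x' * h2
    exact Prod.ext hxx hyy
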